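/- arXiv:1708.01194 — 2 statements merged into one kernel-verified Lean document; each statement's English description precedes it below -/
import Mathlib

section
/- The generalized Fibonacci group F(2,4), defined by the presentation ⟨x₁, x₂, x₃, x₄ ∣ x₁x₂x₃⁻¹, x₂x₃x₄⁻¹, x₃x₄x₁⁻¹, x₄x₁x₂⁻¹⟩, is cyclic of order 5. -/
open Fin.NatCast

/-- The relators of the generalized Fibonacci group `F(r,n)`:
for each `i : Fin n` the word `x_i x_{i+1} ⋯ x_{i+r-1} x_{i+r}⁻¹` (subscripts mod `n`). -/
def fibRels (r n : ℕ) [NeZero n] : Set (FreeGroup (Fin n)) :=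
  Set.range fun i : Fin n =>
    ((List.range r).map fun j => FreeGroup.of (i + (j : Fin n))).prod *
      (FreeGroup.of (i + (r : Fin n)))⁻¹

namespace F24

abbrev G := PresentedGroup (fibRels 2 4)

def x (i : Fin 4) : G := PresentedGroup.of i

lemma rel (i : Fin 4) : x i * x (i + 1) = x (i + 2) := by
  have h : ((FreeGroup.of i * FreeGroup.of (i+1) * (FreeGroup.of (i+2))⁻¹ : FreeGroup (Fin 4))) ∈ fibRels 2 4 := by
    refine ⟨i, ?_⟩
    simp [List.range_succ]
  have h1 : (QuotientGroup.mk (FreeGroup.of i * FreeGroup.of (i+1) * (FreeGroup.of (i+2))⁻¹) : G) = 1 :=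
    (QuotientGroup.eq_one_iff _).2 (Subgroup.subset_normalClosure h)
  have h2 : x i * x (i+1) * (x (i+2))⁻¹ = 1 := h1
  exact mul_inv_eq_one.mp h2

lemma rel0 : x 0 * x 1 = x 2 := rel 0
lemma rel1 : x 1 * x 2 = x 3 := rel 1
lemma rel2 : x 2 * x 3 = x 0 := rel 2
lemma rel3 : x 3 * x 0 = x 1 := rel 3

lemma hb : x 1 = (x 0)⁻¹ * (x 0)⁻¹ := by
  have h3 : x 3 = x 1 * (x 0 * x 1) := by rw [rel0, rel1]
  have h := rel3
  rw [h3] at h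
  have h' : x 1 * (x 0 * x 1 * x 0) = x 1 * 1 := by
    rw [mul_one]; simp only [mul_assoc] at h ⊢; exact h
  have h0 : x 0 * x 1 * x 0 = 1 := mul_left_cancel h'
  have h1 : x 0 * x 1 = (x 0)⁻¹ := eq_inv_of_mul_eq_one_left h0
  calc x 1 = (x 0)⁻¹ * (x 0 * x 1) := by group
    _ = (x 0)⁻¹ * (x 0)⁻¹ := by rw [h1]

lemma ha5 : (x 0) ^ 5 = 1 := by
  have h2 : x 2 = x 0 * x 1 := rel0.symm
  have h3 : x 3 = x 1 * x 2 := rel1.symm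
  have h := rel2
  rw [h2, h3, h2, hb] at h
  group at h
  have h5 : (1:G) = x 0 ^ (5:ℤ) := by
    calc (1:G) = x 0 ^ (4:ℤ) * x 0 ^ (-4:ℤ) := by group
      _ = x 0 ^ (4:ℤ) * x 0 := by rw [h]
      _ = x 0 ^ (5:ℤ) := by group
  exact_mod_cast h5.symm


lemma hx1 : x 1 = x 0 ^ 3 := by
  rw [hb]
  calc (x 0)⁻¹ * (x 0)⁻¹ = (x 0) ^ (5:ℕ) * ((x 0)⁻¹ * (x 0)⁻¹) := by rw [ha5, one_mul]
    _ = x 0 ^ 3 := by group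

lemma hx2 : x 2 = x 0 ^ 4 := by rw [← rel0, hx1]; group

lemma hx3 : x 3 = x 0 ^ 2 := by
  rw [← rel1, hx1, hx2]
  calc x 0 ^ 3 * x 0 ^ 4 = x 0 ^ (5:ℕ) * x 0 ^ 2 := by group
    _ = x 0 ^ 2 := by rw [ha5, one_mul]

def vals : Fin 4 → ZMod 5 := ![1, 3, 4, 2]

def f (i : Fin 4) : Multiplicative (ZMod 5) := Multiplicative.ofAdd (vals i)

lemma hf : ∀ r ∈ fibRels 2 4, FreeGroup.lift f r = 1 := by
  rintro r ⟨i, rfl⟩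
  simp only [List.range_succ, List.range_zero, List.map_append, List.map_nil, List.map_cons,
    List.prod_append, List.prod_cons, List.prod_nil, map_mul, map_inv, FreeGroup.lift_apply_of]
  fin_cases i <;> decide

def φ : G →* Multiplicative (ZMod 5) := PresentedGroup.toGroup hf

lemma φx (i : Fin 4) : φ (x i) = f i := PresentedGroup.toGroup.of hf

lemma xpow_mod (m : ℕ) : x 0 ^ (m % 5) = x 0 ^ m := by
  conv_rhs => rw [← Nat.div_add_mod m 5]
  rw [pow_add, pow_mul, ha5, one_pow, one_mul]

def ψ : Multiplicative (ZMod 5) →* G where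
  toFun z := x 0 ^ (z.toAdd.val)
  map_one' := by
    show x 0 ^ ((0 : ZMod 5)).val = 1
    rw [ZMod.val_zero, pow_zero]
  map_mul' a b := by
    show x 0 ^ ((a.toAdd + b.toAdd).val) = x 0 ^ a.toAdd.val * x 0 ^ b.toAdd.val
    rw [ZMod.val_add, xpow_mod, pow_add]

lemma left : ψ.comp φ = MonoidHom.id G := by
  refine PresentedGroup.ext fun i => ?_
  show ψ (φ (x i)) = x i
  rw [φx]
  fin_cases i
  · show x 0 ^ ((1 : ZMod 5)).val = x 0
    rw [show ((1 : ZMod 5)).val = 1 by decide, pow_one]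
  · show x 0 ^ ((3 : ZMod 5)).val = x 1
    rw [hx1, show ((3 : ZMod 5)).val = 3 by decide]
  · show x 0 ^ ((4 : ZMod 5)).val = x 2
    rw [hx2, show ((4 : ZMod 5)).val = 4 by decide]
  · show x 0 ^ ((2 : ZMod 5)).val = x 3
    rw [hx3, show ((2 : ZMod 5)).val = 2 by decide]

lemma right (z : Multiplicative (ZMod 5)) : φ (ψ z) = z := by
  show φ (x 0 ^ z.toAdd.val) = z
  rw [map_pow, φx]
  show (Multiplicative.ofAdd (1 : ZMod 5)) ^ z.toAdd.val = z
  rw [← ofAdd_nsmul, nsmul_eq_mul, mul_one, ZMod.natCast_val, ZMod.cast_id]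
  rfl

noncomputable def e : G ≃* Multiplicative (ZMod 5) :=
  { toFun := φ, invFun := ψ,
    left_inv := fun g => DFunLike.congr_fun left g,
    right_inv := right,
    map_mul' := map_mul φ }

end F24

/-- `F(2,4)` is cyclic of order 5. -/
theorem F_2_4_cyclic5 :
    Nonempty (PresentedGroup (fibRels 2 4) ≃* Multiplicative (ZMod 5)) := ⟨F24.e⟩
end

section
/- The generalized Fibonacci group F(3,2), defined by the presentation ⟨x₁, x₂ ∣ x₁x₂x₁x₂⁻¹, x₂x₁x₂x₁⁻¹⟩, is isomorphic to the quaternion group Q₈ of order 8. -/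
open Fin.NatCast

namespace F32Aux

open QuaternionGroup

abbrev P := PresentedGroup (fibRels 3 2)

def X : P := PresentedGroup.of 0
def Y : P := PresentedGroup.of 1

lemma mk_rel_eq_one {α : Type*} {rels : Set (FreeGroup α)} {r : FreeGroup α} (h : r ∈ rels) :
    PresentedGroup.mk rels r = 1 :=
  (QuotientGroup.eq_one_iff _).mpr (Subgroup.subset_normalClosure h)

lemma rel1 : X * Y * X = Y := by
  have h := mk_rel_eq_one (rels := fibRels 3 2) ⟨0, rfl⟩
  simp only [List.range_succ, List.range_zero, List.map, List.prod_cons, List.prod_nil,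
    map_mul, map_inv] at h
  norm_num at h
  have h2 : (X * Y * X) * Y⁻¹ = 1 := by convert h using 2 <;> simp only [X, Y, mul_assoc] <;> rfl
  group at h2 ⊢
  exact mul_inv_eq_one.mp h2

lemma rel2 : Y * X * Y = X := by
  have h := mk_rel_eq_one (rels := fibRels 3 2) ⟨1, rfl⟩
  simp only [List.range_succ, List.range_zero, List.map, List.prod_cons, List.prod_nil,
    map_mul, map_inv] at h
  norm_num at h
  have h2 : (Y * X * Y) * X⁻¹ = 1 := by convert h using 2 <;> simp only [X, Y, mul_assoc] <;> rfl
  group at h2 ⊢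
  exact mul_inv_eq_one.mp h2

lemma sq_eq : X * X = Y * Y := by
  have h : X * (Y * X * Y) = (X * Y * X) * Y := by group
  rw [rel1, rel2] at h
  exact h

lemma conj : Y⁻¹ * X * Y = X⁻¹ := by
  calc Y⁻¹ * X * Y = Y⁻¹ * (X * Y * X) * X⁻¹ := by group
    _ = X⁻¹ := by rw [rel1]; group

lemma conjm (m : ℤ) : Y⁻¹ * X ^ m * Y = X ^ (-m) := by
  calc Y⁻¹ * X ^ m * Y = Y⁻¹ * X ^ m * Y⁻¹⁻¹ := by rw [inv_inv]
    _ = (Y⁻¹ * X * Y⁻¹⁻¹) ^ m := conj_zpow.symm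
    _ = (Y⁻¹ * X * Y) ^ m := by rw [inv_inv]
    _ = (X⁻¹) ^ m := by rw [conj]
    _ = X ^ (-m) := by rw [inv_zpow, zpow_neg]

lemma swap (m : ℤ) : X ^ m * Y = Y * X ^ (-m) := by
  have h := conjm m
  calc X ^ m * Y = Y * (Y⁻¹ * X ^ m * Y) := by group
    _ = Y * X ^ (-m) := by rw [h]

lemma sq_eq' : Y * Y = X ^ (2:ℤ) := by
  rw [zpow_two, ← sq_eq]

lemma X4 : X ^ (4:ℤ) = 1 := by
  have h1 := conjm 2
  have h2 : Y⁻¹ * X ^ (2:ℤ) * Y = X ^ (2:ℤ) := by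
    rw [← sq_eq']; group
  rw [h1] at h2
  calc X ^ (4:ℤ) = X ^ (2:ℤ) * X ^ (2:ℤ) := by rw [← zpow_add]; norm_num
    _ = X ^ (-2:ℤ) * X ^ (2:ℤ) := by rw [h2]
    _ = 1 := by rw [← zpow_add]; norm_num

lemma X_zpow_congr {m k : ℤ} (h : ((m : ZMod 4) : ZMod 4) = k) : X ^ m = X ^ k := by
  have hmod : m % 4 = k % 4 := (ZMod.intCast_eq_intCast_iff' m k 4).mp (by exact_mod_cast h)
  calc X ^ m = X ^ (m % (4:ℤ)) := zpow_eq_zpow_emod' m X4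
    _ = X ^ (k % (4:ℤ)) := by rw [hmod]
    _ = X ^ k := (zpow_eq_zpow_emod' k X4).symm

lemma cast_val (i : ZMod 4) : (((i.val : ℤ)) : ZMod 4) = i := by
  push_cast
  simp [ZMod.natCast_val, ZMod.cast_id]

/-- the function to `Q₈` on generators -/
def fQ : Fin 2 → QuaternionGroup 2 := ![a 1, xa 0]

lemma fQ_rels : ∀ r ∈ fibRels 3 2, FreeGroup.lift fQ r = 1 := by
  rintro r ⟨i, rfl⟩
  fin_cases i <;>
  · simp only [List.range_succ, List.range_zero, List.map, List.prod_cons, List.prod_nil,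
      map_mul, map_inv, FreeGroup.lift_apply_of]
    norm_num [fQ]
    decide

def φ : P →* QuaternionGroup 2 := PresentedGroup.toGroup fQ_rels

/-- the inverse function -/
def ψf : QuaternionGroup 2 → P
  | a i => X ^ (i.val : ℤ)
  | xa i => Y * X ^ (i.val : ℤ)

lemma ψf_mul : ∀ x y : QuaternionGroup 2, ψf (x * y) = ψf x * ψf y := by
  rintro (i | i) (j | j)
  · show X ^ (((i + j).val : ℤ)) = X ^ (i.val : ℤ) * X ^ (j.val : ℤ)
    rw [← zpow_add]
    exact X_zpow_congr (by revert i j; decide)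
  · show Y * X ^ (((j - i).val : ℤ)) = X ^ (i.val : ℤ) * (Y * X ^ (j.val : ℤ))
    rw [← mul_assoc, swap, mul_assoc, ← zpow_add]
    exact congrArg (Y * ·) (X_zpow_congr (by revert i j; decide))
  · show Y * X ^ (((i + j).val : ℤ)) = Y * X ^ (i.val : ℤ) * X ^ (j.val : ℤ)
    rw [mul_assoc, ← zpow_add]
    exact congrArg (Y * ·) (X_zpow_congr (by revert i j; decide))
  · show X ^ ((((2:ℕ) + j - i).val : ℤ)) = Y * X ^ (i.val : ℤ) * (Y * X ^ (j.val : ℤ))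
    symm
    calc Y * X ^ (i.val : ℤ) * (Y * X ^ (j.val : ℤ))
        = Y * (X ^ (i.val : ℤ) * Y) * X ^ (j.val : ℤ) := by group
      _ = Y * (Y * X ^ (-(i.val : ℤ))) * X ^ (j.val : ℤ) := by rw [swap]
      _ = (Y * Y) * (X ^ (-(i.val : ℤ)) * X ^ (j.val : ℤ)) := by group
      _ = X ^ (2:ℤ) * (X ^ (-(i.val : ℤ)) * X ^ (j.val : ℤ)) := by rw [sq_eq']
      _ = X ^ (2 + (-(i.val : ℤ) + (j.val : ℤ))) := by rw [← zpow_add, ← zpow_add]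
      _ = X ^ ((((2:ℕ) + j - i).val : ℤ)) := X_zpow_congr (by revert i j; decide)

def ψ : QuaternionGroup 2 →* P := MonoidHom.mk' ψf ψf_mul

lemma φX : φ X = a 1 := by
  show φ (PresentedGroup.of 0) = _
  rw [φ, PresentedGroup.toGroup.of]
  simp [fQ]

lemma φY : φ Y = xa 0 := by
  show φ (PresentedGroup.of 1) = _
  rw [φ, PresentedGroup.toGroup.of]
  simp [fQ]

lemma comp1 : ψ.comp φ = MonoidHom.id P := by
  apply PresentedGroup.ext
  intro x
  fin_cases x
  · show ψ (φ X) = X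
    rw [φX]
    show X ^ (((1 : ZMod (2*2)).val : ℤ)) = X
    have h : (((1 : ZMod (2*2)).val : ℤ)) = 1 := by decide
    rw [h, zpow_one]
  · show ψ (φ Y) = Y
    rw [φY]
    show Y * X ^ (((0 : ZMod (2*2)).val : ℤ)) = Y
    have h : (((0 : ZMod (2*2)).val : ℤ)) = 0 := by decide
    rw [h, zpow_zero, mul_one]

lemma comp2 : φ.comp ψ = MonoidHom.id (QuaternionGroup 2) := by
  ext x
  rcases x with i | i
  · show φ (X ^ (i.val : ℤ)) = a i
    rw [map_zpow, φX, zpow_natCast, a_one_pow]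
    exact congrArg a (by rw [ZMod.natCast_val, ZMod.cast_id])
  · show φ (Y * X ^ (i.val : ℤ)) = xa i
    rw [map_mul, map_zpow, φX, φY, zpow_natCast, a_one_pow, xa_mul_a]
    exact congrArg xa (by rw [zero_add, ZMod.natCast_val, ZMod.cast_id])

end F32Aux

/-- `F(3,2)` is isomorphic to the quaternion group `Q₈` of order 8. -/
theorem F_3_2_isQ8 : Nonempty (PresentedGroup (fibRels 3 2) ≃* QuaternionGroup 2) :=
  ⟨F32Aux.φ.toMulEquiv F32Aux.ψ F32Aux.comp1 F32Aux.comp2⟩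
end
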